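/- arXiv:0907.1794 — 3 statements merged into one kernel-verified Lean document; each statement's English description precedes it below -/
import Mathlib

section
/- For every family of measurable functions a_1,…,a_n and b_1,…,b_n from ℝ to ℝ satisfying E[∑_{i=1}^n a_i²(X_i)] ≤ 1 and E[∑_{l=1}^n b_l²(X_l)] ≤ 1, one has ∑_{i=2}^n ∑_{l=1}^{i−1} E[(g(X_i) − β) a_i(X_i)] · E[(g(X_l) − β) b_l(X_l)] ≤ σ² √(n(n−1)/2). -/
open MeasureTheory ProbabilityTheory Filter
open scoped ENNReal NNReal BigOperators

noncomputable section

/-- Sup norm `‖g‖_∞ = sup_x |g x|` of a (bounded) function. -/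
def supNorm (g : ℝ → ℝ) : ℝ := ⨆ x : ℝ, |g x|

/-- The Haar wavelets on `ℝ`: `ψ_{-1,k} = 1_{[k,k+1)}` and, for `j ≥ 0`,
`ψ_{jk} = 2^{j/2} (1_{[k2^{-j},(k+1/2)2^{-j})} - 1_{[(k+1/2)2^{-j},(k+1)2^{-j})})`. -/
def haar (j k : ℤ) (x : ℝ) : ℝ :=
  if j = -1 then (Set.Ico (k : ℝ) ((k : ℝ) + 1)).indicator (fun _ => (1 : ℝ)) x
  else (2 : ℝ) ^ ((j : ℝ) / 2) *
    ((Set.Ico ((k : ℝ) * (2 : ℝ) ^ (-j)) (((k : ℝ) + 1 / 2) * (2 : ℝ) ^ (-j))).indicator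
        (fun _ => (1 : ℝ)) x
      - (Set.Ico (((k : ℝ) + 1 / 2) * (2 : ℝ) ^ (-j)) (((k : ℝ) + 1) * (2 : ℝ) ^ (-j))).indicator
        (fun _ => (1 : ℝ)) x)

/-- `‖ψ_{jk}‖_∞`, i.e. `1` if `j = -1` and `2^{j/2}` otherwise. -/
def haarSupNorm (j : ℤ) : ℝ := if j = -1 then 1 else (2 : ℝ) ^ ((j : ℝ) / 2)

/-- The Haar wavelet coefficient `β_{jk} = ∫ ψ_{jk} f`. -/
def haarCoef (f : ℝ → ℝ) (j k : ℤ) : ℝ := ∫ x : ℝ, haar j k x * f x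

/-- `σ_{jk}² = ∫ ψ_{jk}² f − β_{jk}²`. -/
def haarVar (f : ℝ → ℝ) (j k : ℤ) : ℝ := (∫ x : ℝ, (haar j k x) ^ 2 * f x) - (haarCoef f j k) ^ 2

/-- Empirical coefficient `n⁻¹ ∑ᵢ g(Yᵢ)` for data `Y`. -/
def empCoefG {n : ℕ} (g : ℝ → ℝ) (Y : Fin n → ℝ) : ℝ := (n : ℝ)⁻¹ * ∑ i, g (Y i)

/-- Empirical variance estimator
`σ̂² = (n(n−1))⁻¹ ∑_{i} ∑_{l<i} (g(Yᵢ) − g(Y_l))²`. -/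
def empVarG {n : ℕ} (g : ℝ → ℝ) (Y : Fin n → ℝ) : ℝ :=
  ((n : ℝ) * ((n : ℝ) - 1))⁻¹ *
    ∑ i : Fin n, ∑ l ∈ Finset.univ.filter (fun l => l < i), (g (Y i) - g (Y l)) ^ 2

/-- `σ̃² = σ̂² + 2M√(2γσ̂² (ln n)/n) + 8γM² (ln n)/n`, `M` playing the role of `‖g‖_∞`. -/
def tildeVarG {n : ℕ} (γ M : ℝ) (g : ℝ → ℝ) (Y : Fin n → ℝ) : ℝ :=
  empVarG g Y + 2 * M * Real.sqrt (2 * γ * empVarG g Y * Real.log n / n)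
    + 8 * γ * M ^ 2 * Real.log n / n

/-- The threshold `η = √(2γσ̃² (ln n)/n) + 2Mγ(ln n)/(3n)`. -/
def threshG {n : ℕ} (γ M : ℝ) (g : ℝ → ℝ) (Y : Fin n → ℝ) : ℝ :=
  Real.sqrt (2 * γ * tildeVarG γ M g Y * Real.log n / n) + 2 * M * γ * Real.log n / (3 * n)

/-- `β̂_{jk}` computed from data `Y`. -/
def empCoef {n : ℕ} (j k : ℤ) (Y : Fin n → ℝ) : ℝ := empCoefG (haar j k) Y

/-- `σ̂_{jk}²` computed from data `Y`. -/
def empVar {n : ℕ} (j k : ℤ) (Y : Fin n → ℝ) : ℝ := empVarG (haar j k) Y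

/-- `σ̃_{jk}²` computed from data `Y`. -/
def tildeVar {n : ℕ} (γ : ℝ) (j k : ℤ) (Y : Fin n → ℝ) : ℝ :=
  tildeVarG γ (haarSupNorm j) (haar j k) Y

/-- The threshold `η_{jk,γ}` computed from data `Y`. -/
def thresh {n : ℕ} (γ : ℝ) (j k : ℤ) (Y : Fin n → ℝ) : ℝ :=
  threshG γ (haarSupNorm j) (haar j k) Y

/-- `j₀ = ⌊log₂(n^c (ln n)^{c'})⌋`. -/
def jmax (n : ℕ) (c c' : ℝ) : ℤ := ⌊Real.logb 2 ((n : ℝ) ^ c * (Real.log n) ^ c')⌋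

/-- The Haar thresholding estimator
`f̃_{n,γ} = ∑_{(j,k) ∈ Γ_n} β̂_{jk} 1_{|β̂_{jk}| ≥ η_{jk,γ}} ψ_{jk}` built from data `Y`. -/
def haarEstimator {n : ℕ} (γ c c' : ℝ) (Y : Fin n → ℝ) (x : ℝ) : ℝ :=
  ∑ j ∈ Finset.Icc (-1 : ℤ) (jmax n c c'),
    ∑' k : ℤ, (if thresh γ j k Y ≤ |empCoef j k Y| then empCoef j k Y else 0) * haar j k x

/-- `f` is a probability density on `ℝ`. -/
def IsDensity (f : ℝ → ℝ) : Prop :=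
  Measurable f ∧ (∀ x, 0 ≤ f x) ∧ (∫ x : ℝ, f x) = 1

/-- `X₁, …, X_n` are i.i.d. random variables with density `f` (w.r.t. Lebesgue measure). -/
def IsIIDSample {Ω : Type*} [MeasurableSpace Ω] (P : Measure Ω) {n : ℕ}
    (X : Fin n → Ω → ℝ) (f : ℝ → ℝ) : Prop :=
  (∀ i, Measurable (X i)) ∧
  iIndepFun X P ∧
  (∀ i, Measure.map (X i) P = volume.withDensity (fun x => ENNReal.ofReal (f x)))

/-- `X₁, …, X_n` are i.i.d. real random variables. -/
def IsIID {Ω : Type*} [MeasurableSpace Ω] (P : Measure Ω) {n : ℕ} (X : Fin n → Ω → ℝ) : Prop :=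
  (∀ i, Measurable (X i)) ∧
  iIndepFun X P ∧
  (∀ i i', Measure.map (X i) P = Measure.map (X i') P)

/-- The `ℓ^p` norm of a `ℤ`-indexed sequence, `p ∈ [1,∞]`. -/
def lpSeqNorm (p : ℝ≥0∞) (a : ℤ → ℝ) : ℝ≥0∞ :=
  if p = ∞ then ⨆ k : ℤ, (‖a k‖₊ : ℝ≥0∞)
  else (∑' k : ℤ, (‖a k‖₊ : ℝ≥0∞) ^ p.toReal) ^ (1 / p.toReal)

/-- The Besov norm `‖f‖_{α,p,q}` computed from the Haar coefficients of `f`. -/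
def besovNorm (α : ℝ) (p q : ℝ≥0∞) (f : ℝ → ℝ) : ℝ≥0∞ :=
  lpSeqNorm p (fun k => haarCoef f (-1) k) +
  (if q = ∞ then
      ⨆ j : ℕ, ((2 : ℝ≥0∞) ^ ((j : ℝ) * (α + 1 / 2 - 1 / p.toReal)) *
        lpSeqNorm p (fun k => haarCoef f (j : ℤ) k))
    else
      (∑' j : ℕ, ((2 : ℝ≥0∞) ^ ((j : ℝ) * (α + 1 / 2 - 1 / p.toReal)) *
        lpSeqNorm p (fun k => haarCoef f (j : ℤ) k)) ^ q.toReal) ^ (1 / q.toReal))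



/-- Cauchy–Schwarz for integrals, in terms of `Real.sqrt`. -/
lemma cs_integral {Ω : Type*} [MeasurableSpace Ω] (P : Measure Ω) {u v : Ω → ℝ}
    (hu : MemLp u 2 P) (hv : MemLp v 2 P) :
    |∫ ω, u ω * v ω ∂P| ≤
      Real.sqrt (∫ ω, u ω ^ 2 ∂P) * Real.sqrt (∫ ω, v ω ^ 2 ∂P) := by
  have hpq : Real.HolderConjugate 2 2 := Real.holderConjugate_iff.mpr ⟨by norm_num, by norm_num⟩
  have h1 : |∫ ω, u ω * v ω ∂P| ≤ ∫ ω, ‖u ω‖ * ‖v ω‖ ∂P := by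
    calc |∫ ω, u ω * v ω ∂P| = ‖∫ ω, u ω * v ω ∂P‖ := (Real.norm_eq_abs _).symm
    _ ≤ ∫ ω, ‖u ω * v ω‖ ∂P := norm_integral_le_integral_norm _
    _ = ∫ ω, ‖u ω‖ * ‖v ω‖ ∂P := by simp [Real.norm_eq_abs, abs_mul]
  have h2 := MeasureTheory.integral_mul_norm_le_Lp_mul_Lq (μ := P) hpq
    (by simpa using hu) (by simpa using hv)
  have hu2 : (∫ ω, ‖u ω‖ ^ (2 : ℝ) ∂P) = ∫ ω, u ω ^ 2 ∂P := by
    refine integral_congr_ae (Filter.Eventually.of_forall fun ω => ?_)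
    simp [Real.rpow_two, Real.norm_eq_abs, sq_abs]
  have hv2 : (∫ ω, ‖v ω‖ ^ (2 : ℝ) ∂P) = ∫ ω, v ω ^ 2 ∂P := by
    refine integral_congr_ae (Filter.Eventually.of_forall fun ω => ?_)
    simp [Real.rpow_two, Real.norm_eq_abs, sq_abs]
  rw [hu2, hv2] at h2
  rw [Real.sqrt_eq_rpow, Real.sqrt_eq_rpow]
  exact h1.trans h2

/-- The bound on the quantity `D` of Houdré–Reynaud-Bouret's inequality: if
`E∑ aᵢ²(Xᵢ) ≤ 1` and `E∑ b_l²(X_l) ≤ 1` then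
`∑_{i=2}^n ∑_{l<i} E[(g(Xᵢ)−β)aᵢ(Xᵢ)] E[(g(X_l)−β)b_l(X_l)] ≤ σ² √(n(n−1)/2)`. -/
theorem statement7 (n : ℕ) (hn : 1 ≤ n)
    (Ω : Type*) [MeasurableSpace Ω] (P : Measure Ω) [IsProbabilityMeasure P]
    (X : Fin n → Ω → ℝ) (hX : IsIID P X)
    (g : ℝ → ℝ) (hg : Measurable g) (hgb : ∃ B, ∀ x, |g x| ≤ B)
    (a b : Fin n → ℝ → ℝ)
    (ham : ∀ i, Measurable (a i)) (hbm : ∀ i, Measurable (b i))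
    (hai : ∀ i, Integrable (fun ω => (a i (X i ω)) ^ 2) P)
    (hbi : ∀ i, Integrable (fun ω => (b i (X i ω)) ^ 2) P)
    (ha1 : (∫ ω, ∑ i, (a i (X i ω)) ^ 2 ∂P) ≤ 1)
    (hb1 : (∫ ω, ∑ i, (b i (X i ω)) ^ 2 ∂P) ≤ 1)
    (m s2 : ℝ) (hm : m = ∫ ω, g (X ⟨0, hn⟩ ω) ∂P)
    (hs2 : s2 = ∫ ω, (g (X ⟨0, hn⟩ ω) - m) ^ 2 ∂P) :
    ∑ i : Fin n, ∑ l ∈ Finset.univ.filter (fun l => l < i),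
        (∫ ω, (g (X i ω) - m) * a i (X i ω) ∂P) * (∫ ω, (g (X l ω) - m) * b l (X l ω) ∂P)
      ≤ s2 * Real.sqrt ((n : ℝ) * ((n : ℝ) - 1) / 2) := by
  classical
  obtain ⟨hXm, _, hXd⟩ := hX
  obtain ⟨B, hB⟩ := hgb
  set i0 : Fin n := ⟨0, hn⟩ with hi0
  -- identical distribution
  have hdist : ∀ (φ : ℝ → ℝ), Measurable φ → ∀ i : Fin n,
      (∫ ω, φ (X i ω) ∂P) = ∫ ω, φ (X i0 ω) ∂P := by
    intro φ hφ i
    rw [← integral_map (hXm i).aemeasurable hφ.aestronglyMeasurable, hXd i i0,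
      integral_map (hXm i0).aemeasurable hφ.aestronglyMeasurable]
  have hs2nn : 0 ≤ s2 := hs2 ▸ integral_nonneg fun ω => sq_nonneg _
  have hgmem : ∀ i : Fin n, MemLp (fun ω => g (X i ω) - m) 2 P := by
    intro i
    refine (memLp_top_of_bound
      ((hg.comp (hXm i)).sub measurable_const).aestronglyMeasurable (B + |m|)
      (Filter.Eventually.of_forall fun ω => ?_)).mono_exponent le_top
    calc ‖g (X i ω) - m‖ ≤ ‖g (X i ω)‖ + ‖m‖ := norm_sub_le _ _
    _ ≤ B + |m| := by
        simp only [Real.norm_eq_abs]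
        exact add_le_add (hB _) le_rfl
  have hs2i : ∀ i : Fin n, (∫ ω, (g (X i ω) - m) ^ 2 ∂P) = s2 := by
    intro i
    rw [hs2]
    exact hdist (fun x => (g x - m) ^ 2) ((hg.sub measurable_const).pow_const 2) i
  set A : Fin n → ℝ := fun i => ∫ ω, (a i (X i ω)) ^ 2 ∂P with hA
  set Bv : Fin n → ℝ := fun i => ∫ ω, (b i (X i ω)) ^ 2 ∂P with hBv
  have hAnn : ∀ i, 0 ≤ A i := fun i => integral_nonneg fun ω => sq_nonneg _
  have hBnn : ∀ i, 0 ≤ Bv i := fun i => integral_nonneg fun ω => sq_nonneg _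
  have hAsum : ∑ i, A i ≤ 1 := by
    rw [hA, ← integral_finset_sum _ fun i _ => hai i]; exact ha1
  have hBsum : ∑ i, Bv i ≤ 1 := by
    rw [hBv, ← integral_finset_sum _ fun i _ => hbi i]; exact hb1
  have hα : ∀ i : Fin n, |∫ ω, (g (X i ω) - m) * a i (X i ω) ∂P| ≤
      Real.sqrt s2 * Real.sqrt (A i) := by
    intro i
    have := cs_integral P (hgmem i)
      ((memLp_two_iff_integrable_sq ((ham i).comp (hXm i)).aestronglyMeasurable).2 (hai i))
    rwa [hs2i i] at this
  have hβ : ∀ i : Fin n, |∫ ω, (g (X i ω) - m) * b i (X i ω) ∂P| ≤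
      Real.sqrt s2 * Real.sqrt (Bv i) := by
    intro i
    have := cs_integral P (hgmem i)
      ((memLp_two_iff_integrable_sq ((hbm i).comp (hXm i)).aestronglyMeasurable).2 (hbi i))
    rwa [hs2i i] at this
  set S : Finset ((_ : Fin n) × Fin n) :=
    Finset.univ.sigma fun i : Fin n => Finset.univ.filter fun l => l < i with hS
  set T : ℝ := ∑ p ∈ S, Real.sqrt (A p.1) * Real.sqrt (Bv p.2) with hT
  have hTnn : 0 ≤ T :=
    Finset.sum_nonneg fun p _ => mul_nonneg (Real.sqrt_nonneg _) (Real.sqrt_nonneg _)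
  -- cardinality of S
  have hcard : (S.card : ℝ) = (n : ℝ) * ((n : ℝ) - 1) / 2 := by
    have h1 : S.card = ∑ i : Fin n, (i : ℕ) := by
      rw [hS, Finset.card_sigma]
      refine Finset.sum_congr rfl fun i _ => ?_
      rw [show (Finset.univ.filter fun l => l < i) = Finset.Iio i from by
        ext l; simp]
      exact Fin.card_Iio i
    have h2 : (∑ i : Fin n, (i : ℕ)) * 2 = n * (n - 1) := by
      rw [Fin.sum_univ_eq_sum_range (fun i => i)]
      exact Finset.sum_range_id_mul_two n
    have h3 : ((S.card : ℝ)) * 2 = (n : ℝ) * ((n : ℝ) - 1) := by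
      have := congrArg (fun k : ℕ => (k : ℝ)) (h1 ▸ h2 : S.card * 2 = n * (n - 1))
      push_cast [Nat.cast_sub hn] at this
      convert this using 2 <;> push_cast <;> ring
    linarith
  -- the sum of products of A and Bv over S is at most 1
  have hABsum : ∑ p ∈ S, A p.1 * Bv p.2 ≤ 1 := by
    have hsub : S ⊆ Finset.univ.sigma fun _ : Fin n => (Finset.univ : Finset (Fin n)) := by
      rw [hS]
      exact Finset.sigma_mono (le_refl _) fun i => Finset.filter_subset _ _
    calc ∑ p ∈ S, A p.1 * Bv p.2
        ≤ ∑ p ∈ Finset.univ.sigma fun _ : Fin n => (Finset.univ : Finset (Fin n)),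
            A p.1 * Bv p.2 :=
          Finset.sum_le_sum_of_subset_of_nonneg hsub
            fun p _ _ => mul_nonneg (hAnn _) (hBnn _)
      _ = (∑ i, A i) * ∑ l, Bv l := by
          rw [Finset.sum_sigma]
          exact (Finset.sum_mul_sum _ _ _ _).symm
      _ ≤ 1 := mul_le_one₀ hAsum (Finset.sum_nonneg fun l _ => hBnn l) hBsum
  -- Cauchy–Schwarz on the finite sum
  have hT2 : T ^ 2 ≤ (n : ℝ) * ((n : ℝ) - 1) / 2 := by
    have := Finset.sum_sq_le_sum_mul_sum_of_sq_eq_mul S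
      (r := fun p => Real.sqrt (A p.1) * Real.sqrt (Bv p.2))
      (f := fun _ => (1 : ℝ)) (g := fun p => A p.1 * Bv p.2)
      (fun p _ => zero_le_one) (fun p _ => mul_nonneg (hAnn _) (hBnn _))
      (fun p _ => by
        simp only [one_mul]
        rw [mul_pow, Real.sq_sqrt (hAnn _), Real.sq_sqrt (hBnn _)])
    rw [Finset.sum_const, nsmul_eq_mul, mul_one] at this
    calc T ^ 2 ≤ (S.card : ℝ) * ∑ p ∈ S, A p.1 * Bv p.2 := this
    _ ≤ (S.card : ℝ) * 1 := by
        refine mul_le_mul_of_nonneg_left hABsum (by positivity)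
    _ = (n : ℝ) * ((n : ℝ) - 1) / 2 := by rw [mul_one, hcard]
  have hTle : T ≤ Real.sqrt ((n : ℝ) * ((n : ℝ) - 1) / 2) := by
    have h0 : 0 ≤ (n : ℝ) * ((n : ℝ) - 1) / 2 := le_trans (sq_nonneg T) hT2
    nlinarith [Real.sq_sqrt h0, Real.sqrt_nonneg ((n : ℝ) * ((n : ℝ) - 1) / 2),
      sq_nonneg (T - Real.sqrt ((n : ℝ) * ((n : ℝ) - 1) / 2))]
  -- main chain
  calc ∑ i : Fin n, ∑ l ∈ Finset.univ.filter (fun l => l < i),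
        (∫ ω, (g (X i ω) - m) * a i (X i ω) ∂P) * (∫ ω, (g (X l ω) - m) * b l (X l ω) ∂P)
      = ∑ p ∈ S, (∫ ω, (g (X p.1 ω) - m) * a p.1 (X p.1 ω) ∂P)
          * (∫ ω, (g (X p.2 ω) - m) * b p.2 (X p.2 ω) ∂P) := by
        rw [hS, Finset.sum_sigma']
    _ ≤ ∑ p ∈ S, (Real.sqrt s2 * Real.sqrt (A p.1)) * (Real.sqrt s2 * Real.sqrt (Bv p.2)) := by
        refine Finset.sum_le_sum fun p _ => ?_
        calc (∫ ω, (g (X p.1 ω) - m) * a p.1 (X p.1 ω) ∂P)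
              * (∫ ω, (g (X p.2 ω) - m) * b p.2 (X p.2 ω) ∂P)
            ≤ |(∫ ω, (g (X p.1 ω) - m) * a p.1 (X p.1 ω) ∂P)
              * (∫ ω, (g (X p.2 ω) - m) * b p.2 (X p.2 ω) ∂P)| := le_abs_self _
          _ = |∫ ω, (g (X p.1 ω) - m) * a p.1 (X p.1 ω) ∂P|
              * |∫ ω, (g (X p.2 ω) - m) * b p.2 (X p.2 ω) ∂P| := abs_mul _ _
          _ ≤ (Real.sqrt s2 * Real.sqrt (A p.1)) * (Real.sqrt s2 * Real.sqrt (Bv p.2)) :=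
            mul_le_mul (hα p.1) (hβ p.2) (abs_nonneg _)
              (mul_nonneg (Real.sqrt_nonneg _) (Real.sqrt_nonneg _))
    _ = s2 * T := by
        rw [hT, Finset.mul_sum]
        refine Finset.sum_congr rfl fun p _ => ?_
        have hms : Real.sqrt s2 * Real.sqrt s2 = s2 := Real.mul_self_sqrt hs2nn
        calc (Real.sqrt s2 * Real.sqrt (A p.1)) * (Real.sqrt s2 * Real.sqrt (Bv p.2))
            = (Real.sqrt s2 * Real.sqrt s2) * (Real.sqrt (A p.1) * Real.sqrt (Bv p.2)) := by ring
        _ = s2 * (Real.sqrt (A p.1) * Real.sqrt (Bv p.2)) := by rw [hms]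
    _ ≤ s2 * Real.sqrt ((n : ℝ) * ((n : ℝ) - 1) / 2) :=
        mul_le_mul_of_nonneg_left hTle hs2nn

end
end

section
/- For n ≥ 2, E[ max_{1 ≤ i ≤ n} | ∑_{l=1}^{i−1} (g(X_l) − β) | ] ≤ ‖g‖_∞ √(2(n−1) ln(2n)), where the sum over l from 1 to 0 is interpreted as 0. -/
open MeasureTheory ProbabilityTheory Filter
open scoped ENNReal NNReal BigOperators

noncomputable section

section Helpers
open Real


lemma auxD_pos {p : ℝ} (hp0 : 0 ≤ p) (hp1 : p ≤ 1) (x : ℝ) : 0 < 1 - p + p * exp x := by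
  rcases eq_or_lt_of_le hp0 with h0 | h0
  · simp [← h0]
  · have := exp_pos x
    nlinarith

lemma keyIneq {p : ℝ} (hp0 : 0 ≤ p) (hp1 : p ≤ 1) (h : ℝ) :
    Real.log (1 - p + p * Real.exp h) - p * h ≤ h ^ 2 / 8 := by
  set f : ℝ → ℝ := fun x => x ^ 2 / 8 - (Real.log (1 - p + p * Real.exp x) - p * x) with hfdef
  set f' : ℝ → ℝ := fun x => x / 4 + p - p * Real.exp x / (1 - p + p * Real.exp x) with hf'def
  have hD : ∀ x, 0 < 1 - p + p * exp x := auxD_pos hp0 hp1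
  have hDdiff : ∀ x : ℝ, HasDerivAt (fun y => 1 - p + p * Real.exp y) (p * Real.exp x) x := by
    intro x
    simpa using ((Real.hasDerivAt_exp x).const_mul p).const_add (1 - p)
  have hderiv : ∀ x, HasDerivAt f (f' x) x := by
    intro x
    have h2 : HasDerivAt (fun y => Real.log (1 - p + p * Real.exp y))
        (p * Real.exp x / (1 - p + p * Real.exp x)) x := (hDdiff x).log (hD x).ne'
    have h3 : HasDerivAt (fun y : ℝ => y ^ 2 / 8) (x / 4) x := by
      have := (hasDerivAt_pow 2 x).div_const 8
      refine this.congr_deriv ?_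
      push_cast; ring
    have h4 : HasDerivAt (fun y : ℝ => p * y) p x := by
      simpa using (hasDerivAt_id x).const_mul p
    have := h3.sub (h2.sub h4)
    refine this.congr_deriv ?_
    simp [hf'def]; ring
  have hderiv' : ∀ x, HasDerivAt f'
      (1/4 - (p * Real.exp x * (1 - p + p * Real.exp x)
        - p * Real.exp x * (p * Real.exp x)) / (1 - p + p * Real.exp x) ^ 2) x := by
    intro x
    have h1 : HasDerivAt (fun y => p * Real.exp y) (p * Real.exp x) x :=
      (Real.hasDerivAt_exp x).const_mul p
    have h2 : HasDerivAt (fun y => p * Real.exp y / (1 - p + p * Real.exp y))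
        ((p * Real.exp x * (1 - p + p * Real.exp x)
          - p * Real.exp x * (p * Real.exp x)) / (1 - p + p * Real.exp x) ^ 2) x :=
      h1.div (hDdiff x) (hD x).ne'
    have h3 : HasDerivAt (fun y : ℝ => y / 4 + p) (1/4) x := by
      simpa using ((hasDerivAt_id x).div_const 4).add_const p
    exact h3.sub h2
  have hf''nonneg : ∀ x, 0 ≤ 1/4 - (p * Real.exp x * (1 - p + p * Real.exp x)
        - p * Real.exp x * (p * Real.exp x)) / (1 - p + p * Real.exp x) ^ 2 := by
    intro x
    have hDx := hD x
    rw [sub_nonneg, div_le_iff₀ (by positivity)]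
    nlinarith [sq_nonneg ((1 - p) - p * Real.exp x), exp_pos x]
  have hf'mono : Monotone f' :=
    monotone_of_deriv_nonneg (fun x => (hderiv' x).differentiableAt)
      (fun x => by rw [(hderiv' x).deriv]; exact hf''nonneg x)
  have hf'0 : f' 0 = 0 := by
    simp [hf'def]
  have hf0 : f 0 = 0 := by
    simp [hfdef]
  have hge : ∀ x, 0 ≤ f x := by
    intro x
    rcases le_total 0 x with hx | hx
    · have hmono : MonotoneOn f (Set.Ici 0) := by
        apply monotoneOn_of_deriv_nonneg (convex_Ici 0)
          (fun y _ => (hderiv y).differentiableAt.continuousAt.continuousWithinAt)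
          (fun y _ => (hderiv y).differentiableAt.differentiableWithinAt)
        intro y hy
        rw [(hderiv y).deriv, ← hf'0]
        exact hf'mono (le_of_lt (by simpa using hy))
      have := hmono (Set.self_mem_Ici) hx hx
      rwa [hf0] at this
    · have hmono : AntitoneOn f (Set.Iic 0) := by
        apply antitoneOn_of_deriv_nonpos (convex_Iic 0)
          (fun y _ => (hderiv y).differentiableAt.continuousAt.continuousWithinAt)
          (fun y _ => (hderiv y).differentiableAt.differentiableWithinAt)
        intro y hy
        rw [(hderiv y).deriv, ← hf'0]
        exact hf'mono (le_of_lt (by simpa using hy))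
      have := hmono hx (Set.self_mem_Iic) hx
      rwa [hf0] at this
    
  have := hge h
  simp only [hfdef] at this
  linarith

lemma hoeffding_mgf {Ω : Type*} [MeasurableSpace Ω] (μ : Measure Ω) [IsProbabilityMeasure μ]
    {Y : Ω → ℝ} (hY : Measurable Y) {a b : ℝ} (hab : ∀ ω, a ≤ Y ω ∧ Y ω ≤ b)
    (hmean : ∫ ω, Y ω ∂μ = 0) (t : ℝ) :
    mgf Y μ t ≤ Real.exp (t ^ 2 * (b - a) ^ 2 / 8) := by
  have hYint : Integrable Y μ := by
    apply (integrable_const (max |a| |b|)).mono' hY.aestronglyMeasurable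
    filter_upwards with ω
    exact abs_le_max_abs_abs (hab ω).1 (hab ω).2
  have ha0 : a ≤ 0 := by
    have := integral_mono (integrable_const a) hYint (fun ω => (hab ω).1)
    simpa [hmean] using this
  have hb0 : 0 ≤ b := by
    have := integral_mono hYint (integrable_const b) (fun ω => (hab ω).2)
    simpa [hmean] using this
  rcases eq_or_lt_of_le (le_trans ha0 hb0) with heq | hlt
  · -- a = b, so a = 0 = b and Y = 0
    have ha : a = 0 := le_antisymm ha0 (heq ▸ hb0)
    have hY0 : ∀ ω, Y ω = 0 := fun ω => le_antisymm (ha ▸ heq ▸ (hab ω).2) (ha ▸ (hab ω).1)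
    have : mgf Y μ t = 1 := by
      rw [mgf]
      simp [hY0]
    rw [this]
    rw [Real.one_le_exp_iff]  -- maybe name differs
    positivity
  · set p : ℝ := -a / (b - a) with hp
    have hba : (0:ℝ) < b - a := by linarith
    have hp0 : 0 ≤ p := by
      apply div_nonneg (by linarith) (by linarith)
    have hp1 : p ≤ 1 := by
      rw [div_le_one hba]; linarith
    set h : ℝ := t * (b - a) with hh
    set c : ℝ := (exp (t*b) - exp (t*a))/(b-a) with hc
    set C : ℝ := (b * exp (t*a) - a * exp (t*b))/(b-a) with hC
    have hptw : ∀ ω, exp (t * Y ω) ≤ Y ω * c + C := by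
      intro ω
      obtain ⟨h1, h2⟩ := hab ω
      set y := Y ω
      have hθ1 : (0:ℝ) ≤ (b - y)/(b-a) := div_nonneg (by linarith) hba.le
      have hθ2 : (0:ℝ) ≤ (y - a)/(b-a) := div_nonneg (by linarith) hba.le
      have hθ3 : (b - y)/(b-a) + (y - a)/(b-a) = 1 := by field_simp; ring
      have := convexOn_exp.2 (Set.mem_univ (t*a)) (Set.mem_univ (t*b)) hθ1 hθ2 hθ3
      simp only [smul_eq_mul] at this
      have harg : (b - y)/(b-a) * (t*a) + (y - a)/(b-a) * (t*b) = t * y := by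
        field_simp; ring
      rw [harg] at this
      refine this.trans (le_of_eq ?_)
      rw [hc, hC]
      field_simp
      ring
    have hexpint : Integrable (fun ω => exp (t * Y ω)) μ := by
      apply (integrable_const (exp (|t| * max |a| |b|))).mono'
        ((hY.const_mul t).exp).aestronglyMeasurable
      filter_upwards with ω
      rw [Real.norm_eq_abs, abs_of_pos (exp_pos _), Real.exp_le_exp]
      calc t * Y ω ≤ |t * Y ω| := le_abs_self _
        _ = |t| * |Y ω| := abs_mul _ _
        _ ≤ |t| * max |a| |b| := by
            apply mul_le_mul_of_nonneg_left _ (abs_nonneg t)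
            exact abs_le_max_abs_abs (hab ω).1 (hab ω).2
    have hint : mgf Y μ t ≤ C := by
      rw [mgf]
      have := integral_mono hexpint ((hYint.mul_const c).add (integrable_const C)) hptw
      simp only [Pi.add_apply] at this
      refine this.trans (le_of_eq ?_)
      rw [integral_add (hYint.mul_const c) (integrable_const C), integral_mul_const, hmean]
      simp
    refine hint.trans ?_
    have hD : 0 < 1 - p + p * exp h := auxD_pos hp0 hp1 h
    have hCeq : C = exp (t*a + Real.log (1 - p + p * exp h)) := by
      rw [Real.exp_add, Real.exp_log hD, hC, hh, hp]
      rw [show t*b = t*a + t*(b-a) by ring, Real.exp_add]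
      field_simp
      ring
    rw [hCeq, Real.exp_le_exp]
    have hkey := keyIneq hp0 hp1 h
    have hph : p * h = -(t*a) := by
      rw [hp, hh]; field_simp
    have hh2 : h ^ 2 / 8 = t ^ 2 * (b - a) ^ 2 / 8 := by rw [hh]; ring
    linarith

end Helpers

open Real

/-- The maximal inequality (via Devroye–Lugosi):
`E[max_{1 ≤ i ≤ n} |∑_{l=1}^{i−1} (g(X_l) − β)|] ≤ ‖g‖_∞ √(2(n−1) ln(2n))`. -/
theorem statement8 (n : ℕ) (hn : 2 ≤ n)
    (Ω : Type*) [MeasurableSpace Ω] (P : Measure Ω) [IsProbabilityMeasure P]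
    (X : Fin n → Ω → ℝ) (hX : IsIID P X)
    (g : ℝ → ℝ) (hg : Measurable g) (hb : ∃ B, ∀ x, |g x| ≤ B)
    (m : ℝ) (hm : m = ∫ ω, g (X ⟨0, by omega⟩ ω) ∂P) :
    (∫ ω, ⨆ i : Fin n, |∑ l ∈ Finset.univ.filter (fun l => l < i), (g (X l ω) - m)| ∂P)
      ≤ supNorm g * Real.sqrt (2 * ((n : ℝ) - 1) * Real.log (2 * n)) := by
  haveI : Nonempty (Fin n) := ⟨⟨0, by omega⟩⟩
  obtain ⟨hXmeas, hXindep, hXid⟩ := hX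
  obtain ⟨B, hB⟩ := hb
  have hbdd : BddAbove (Set.range fun x => |g x|) := ⟨B, by rintro _ ⟨x, rfl⟩; exact hB x⟩
  set M := supNorm g with hMdef
  have hM : ∀ x, |g x| ≤ M := fun x => le_ciSup hbdd x
  have hM0 : (0:ℝ) ≤ M := le_trans (abs_nonneg (g 0)) (hM 0)
  rcases eq_or_lt_of_le hM0 with hM0' | hMpos
  · -- M = 0, so g ≡ 0
    have hg0 : ∀ x, g x = 0 := fun x => abs_eq_zero.mp (le_antisymm (hM0' ▸ hM x) (abs_nonneg _))
    have hm0 : m = 0 := by rw [hm]; simp [hg0]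
    have hint0 : ∀ ω, (⨆ i : Fin n,
        |∑ l ∈ Finset.univ.filter (fun l => l < i), (g (X l ω) - m)|) = 0 := by
      intro ω
      simp [hg0, hm0]
    rw [show (fun ω => ⨆ i : Fin n,
        |∑ l ∈ Finset.univ.filter (fun l => l < i), (g (X l ω) - m)|) = fun _ => (0:ℝ)
      from funext hint0]  -- might need adjustment
    simp
    positivity
  -- main case
  have hn1 : (1:ℝ) ≤ (n:ℝ) - 1 := by
    have : (2:ℝ) ≤ n := by exact_mod_cast hn
    linarith
  have hL : 0 < Real.log (2 * n) := by
    apply Real.log_pos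
    have : (2:ℝ) ≤ n := by exact_mod_cast hn
    linarith
  set L := Real.log (2 * n) with hLdef
  set t := Real.sqrt (2 * L) / (M * Real.sqrt ((n:ℝ) - 1)) with htdef
  have hsq : Real.sqrt ((n:ℝ) - 1) > 0 := Real.sqrt_pos.2 (by linarith)
  have hs2L : Real.sqrt (2 * L) > 0 := Real.sqrt_pos.2 (by linarith)
  have ht : 0 < t := div_pos hs2L (mul_pos hMpos hsq)
  -- the centered variables
  set Y : Fin n → Ω → ℝ := fun l ω => g (X l ω) - m with hYdef
  have hYmeas : ∀ l, Measurable (Y l) := fun l => (hg.comp (hXmeas l)).sub measurable_const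
  have hgXint : ∀ l, Integrable (fun ω => g (X l ω)) P := by
    intro l
    apply (integrable_const M).mono' (hg.comp (hXmeas l)).aestronglyMeasurable
    filter_upwards with ω
    exact hM _
  have hmean : ∀ l, ∫ ω, g (X l ω) ∂P = m := by
    intro l
    rw [hm]
    rw [← integral_map (hXmeas l).aemeasurable hg.aestronglyMeasurable,
      ← integral_map (hXmeas ⟨0, by omega⟩).aemeasurable hg.aestronglyMeasurable,
      hXid l ⟨0, by omega⟩]
  have hYmean : ∀ l, ∫ ω, Y l ω ∂P = 0 := by
    intro l
    rw [hYdef]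
    simp only
    rw [integral_sub (hgXint l) (integrable_const m), hmean l]
    simp
  have hYbd : ∀ l ω, -M - m ≤ Y l ω ∧ Y l ω ≤ M - m := by
    intro l ω
    have := abs_le.mp (hM (X l ω))
    constructor <;> simp only [hYdef] <;> [linarith [this.1]; linarith [this.2]]
  have hmgf : ∀ (l : Fin n) (s : ℝ), mgf (Y l) P s ≤ exp (s ^ 2 * M ^ 2 / 2) := by
    intro l s
    have h1 := hoeffding_mgf P (hYmeas l) (hYbd l) (hYmean l) s
    refine h1.trans (le_of_eq ?_)
    congr 1
    ring
  have hYindep : iIndepFun Y P :=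
    hXindep.comp (fun _ x => g x - m) (fun _ => hg.sub measurable_const)
  -- the partial sums
  set S : Fin n → Ω → ℝ :=
    fun i ω => ∑ l ∈ Finset.univ.filter (fun l => l < i), Y l ω with hSdef
  have hSmeas : ∀ i, Measurable (S i) := by
    intro i
    apply Finset.measurable_sum
    exact fun l _ => hYmeas l
  have hcard : ∀ i : Fin n,
      ((Finset.univ.filter (fun l => l < i)).card : ℝ) ≤ (n:ℝ) - 1 := by
    intro i
    have hsub : Finset.univ.filter (fun l => l < i) ⊆ Finset.univ.erase i := by
      intro l hl
      simp only [Finset.mem_filter] at hl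
      exact Finset.mem_erase.2 ⟨ne_of_lt hl.2, Finset.mem_univ l⟩
    have h1 : (Finset.univ.filter (fun l => l < i)).card ≤ n - 1 := by
      have := Finset.card_le_card hsub
      rwa [Finset.card_erase_of_mem (Finset.mem_univ i), Finset.card_univ, Fintype.card_fin] at this
    have h2 : ((n:ℝ) - 1) = ((n - 1 : ℕ) : ℝ) := by
      rw [Nat.cast_sub (by omega)]; simp
    rw [h2]
    exact_mod_cast h1
  have hSmgf : ∀ (i : Fin n) (s : ℝ), mgf (S i) P s ≤ exp (((n:ℝ)-1) * s ^ 2 * M ^ 2 / 2) := by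
    intro i s
    have hfun : S i = ∑ l ∈ Finset.univ.filter (fun l => l < i), Y l := by
      funext ω
      rw [hSdef]
      simp [Finset.sum_apply]
    rw [hfun, hYindep.mgf_sum hYmeas]
    calc (∏ l ∈ Finset.univ.filter (fun l => l < i), mgf (Y l) P s)
        ≤ ∏ l ∈ Finset.univ.filter (fun l => l < i), exp (s ^ 2 * M ^ 2 / 2) :=
          Finset.prod_le_prod (fun l _ => mgf_nonneg) (fun l _ => hmgf l s)
      _ = exp (s ^ 2 * M ^ 2 / 2) ^ (Finset.univ.filter (fun l => l < i)).card :=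
          Finset.prod_const _
      _ = exp (((Finset.univ.filter (fun l => l < i)).card : ℝ) * (s ^ 2 * M ^ 2 / 2)) := by
          rw [← Real.exp_nat_mul]
      _ ≤ exp (((n:ℝ)-1) * s ^ 2 * M ^ 2 / 2) := by
          rw [Real.exp_le_exp]
          have := hcard i
          nlinarith [sq_nonneg s, sq_nonneg M, mul_nonneg (sq_nonneg s) (sq_nonneg M)]
  -- bounds on S and Z
  have hMabs : |m| ≤ M := by
    rw [hm]
    calc |∫ ω, g (X ⟨0, by omega⟩ ω) ∂P| ≤ ∫ ω, |g (X ⟨0, by omega⟩ ω)| ∂P := by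
          simpa [Real.norm_eq_abs] using
            norm_integral_le_integral_norm (fun ω => g (X ⟨0, by omega⟩ ω)) (μ := P)
      _ ≤ ∫ _ω, M ∂P := integral_mono (hgXint _).abs (integrable_const M) (fun ω => hM _)
      _ = M := by simp
  have hSbd : ∀ i ω, |S i ω| ≤ 2 * M * n := by
    intro i ω
    calc |S i ω| ≤ ∑ l ∈ Finset.univ.filter (fun l => l < i), |Y l ω| :=
          Finset.abs_sum_le_sum_abs _ _
      _ ≤ ∑ l ∈ Finset.univ.filter (fun l => l < i), 2 * M := by
          apply Finset.sum_le_sum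
          intro l _
          have h1 := abs_le.mp (hM (X l ω))
          have h2 := abs_le.mp hMabs
          rw [hYdef]
          simp only
          rw [abs_le]
          constructor <;> linarith [h1.1, h1.2, h2.1, h2.2]
      _ = (Finset.univ.filter (fun l => l < i)).card * (2 * M) := by
          rw [Finset.sum_const]; simp [mul_comm]
      _ ≤ n * (2 * M) := by
          apply mul_le_mul_of_nonneg_right _ (by linarith)
          calc ((Finset.univ.filter (fun l => l < i)).card : ℝ) ≤ (n:ℝ) - 1 := hcard i
            _ ≤ n := by linarith
      _ = 2 * M * n := by ring
  set Z : Ω → ℝ := fun ω => ⨆ i : Fin n, |S i ω| with hZdef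
  have hZbdd : ∀ ω, BddAbove (Set.range fun i : Fin n => |S i ω|) :=
    fun ω => Set.Finite.bddAbove (Set.finite_range _)
  have hZnonneg : ∀ ω, 0 ≤ Z ω :=
    fun ω => le_trans (abs_nonneg _) (le_ciSup (hZbdd ω) (⟨0, by omega⟩ : Fin n))
  have hZle : ∀ ω, Z ω ≤ 2 * M * n := fun ω => ciSup_le (fun i => hSbd i ω)
  have hZmeas : Measurable Z := by
    have h1 : Measurable (Finset.univ.sup' Finset.univ_nonempty (fun i ω => |S i ω|)) :=
      Finset.measurable_sup' _ (fun i _ => (hSmeas i).abs)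
    have h2 : Z = Finset.univ.sup' Finset.univ_nonempty (fun i ω => |S i ω|) := by
      funext ω
      show (⨆ i : Fin n, |S i ω|) = _
      rw [Finset.sup'_apply, ← Finset.sup'_univ_eq_ciSup]
    rw [h2]; exact h1
  have hZint : Integrable Z P := by
    apply (integrable_const (2 * M * n)).mono' hZmeas.aestronglyMeasurable
    filter_upwards with ω
    rw [Real.norm_eq_abs, abs_of_nonneg (hZnonneg ω)]
    exact hZle ω
  -- integrability of exponentials
  have hexpint : ∀ (W : Ω → ℝ), Measurable W → (∀ ω, |W ω| ≤ 2 * M * n) → ∀ s : ℝ,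
      Integrable (fun ω => exp (s * W ω)) P := by
    intro W hW hWbd s
    apply (integrable_const (exp (|s| * (2 * M * n)))).mono'
      ((hW.const_mul s).exp).aestronglyMeasurable
    filter_upwards with ω
    rw [Real.norm_eq_abs, abs_of_pos (exp_pos _), Real.exp_le_exp]
    calc s * W ω ≤ |s * W ω| := le_abs_self _
      _ = |s| * |W ω| := abs_mul _ _
      _ ≤ |s| * (2 * M * n) := mul_le_mul_of_nonneg_left (hWbd ω) (abs_nonneg s)
  -- pointwise exponential bound
  have hptw : ∀ ω, exp (t * Z ω) ≤
      ∑ i : Fin n, (exp (t * S i ω) + exp (-t * S i ω)) := by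
    intro ω
    obtain ⟨j, hj⟩ := Finite.exists_max (fun i : Fin n => |S i ω|)
    have hZω : Z ω ≤ |S j ω| := ciSup_le hj
    calc exp (t * Z ω) ≤ exp (t * |S j ω|) :=
          Real.exp_le_exp.2 (mul_le_mul_of_nonneg_left hZω ht.le)
      _ ≤ exp (t * S j ω) + exp (-t * S j ω) := by
          rcases abs_cases (S j ω) with ⟨h1, _⟩ | ⟨h1, _⟩
          · rw [h1]
            exact le_add_of_nonneg_right (exp_pos _).le
          · rw [h1]
            rw [show t * -S j ω = -t * S j ω by ring]
            exact le_add_of_nonneg_left (exp_pos _).le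
      _ ≤ ∑ i : Fin n, (exp (t * S i ω) + exp (-t * S i ω)) :=
          Finset.single_le_sum (f := fun i : Fin n => rexp (t * S i ω) + rexp (-t * S i ω))
            (fun i _ => by positivity) (Finset.mem_univ j)
  -- integral of exp (t Z)
  have hE : exp (((n:ℝ)-1) * t ^ 2 * M ^ 2 / 2) = 2 * n := by
    have ht2 : t ^ 2 = 2 * L / (M ^ 2 * ((n:ℝ) - 1)) := by
      rw [htdef, div_pow, mul_pow, Real.sq_sqrt (by linarith : (0:ℝ) ≤ 2 * L),
        Real.sq_sqrt (by linarith : (0:ℝ) ≤ (n:ℝ) - 1)]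
    have : ((n:ℝ)-1) * t ^ 2 * M ^ 2 / 2 = L := by
      rw [ht2]
      field_simp
    rw [this, hLdef, Real.exp_log (by positivity)]
  have hintZexp : ∫ ω, exp (t * Z ω) ∂P ≤ exp (2 * L) := by
    have hsumint : Integrable
        (fun ω => ∑ i : Fin n, (exp (t * S i ω) + exp (-t * S i ω))) P := by
      apply integrable_finset_sum
      intro i _
      exact (hexpint (S i) (hSmeas i) (fun ω => hSbd i ω) t).add
        (hexpint (S i) (hSmeas i) (fun ω => hSbd i ω) (-t))
    calc ∫ ω, exp (t * Z ω) ∂P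
        ≤ ∫ ω, ∑ i : Fin n, (exp (t * S i ω) + exp (-t * S i ω)) ∂P :=
          integral_mono (hexpint Z hZmeas (fun ω => by
            rw [abs_of_nonneg (hZnonneg ω)]; exact hZle ω) t) hsumint hptw
      _ = ∑ i : Fin n, ∫ ω, (exp (t * S i ω) + exp (-t * S i ω)) ∂P :=
          integral_finset_sum _ (fun i _ =>
            (hexpint (S i) (hSmeas i) (fun ω => hSbd i ω) t).add
              (hexpint (S i) (hSmeas i) (fun ω => hSbd i ω) (-t)))
      _ = ∑ i : Fin n, (mgf (S i) P t + mgf (S i) P (-t)) := by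
          apply Finset.sum_congr rfl
          intro i _
          rw [integral_add (hexpint (S i) (hSmeas i) (fun ω => hSbd i ω) t)
            (hexpint (S i) (hSmeas i) (fun ω => hSbd i ω) (-t))]
          rfl
      _ ≤ ∑ i : Fin n, (2 * n + 2 * n : ℝ) := by
          apply Finset.sum_le_sum
          intro i _
          have h1 := (hSmgf i t).trans_eq hE
          have h2 := (hSmgf i (-t)).trans_eq (by rw [← hE]; ring_nf : 
            exp (((n:ℝ)-1) * (-t) ^ 2 * M ^ 2 / 2) = 2 * n)
          exact add_le_add h1 h2
      _ = exp (2 * L) := by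
          rw [Finset.sum_const, Finset.card_univ, Fintype.card_fin]
          have : exp (2 * L) = (2 * n) * (2 * n) := by
            rw [show (2:ℝ) * L = L + L by ring, Real.exp_add, hLdef,
              Real.exp_log (by positivity)]
          rw [this]
          push_cast
          ring
  -- Jensen
  have hjensen : exp (t * ∫ ω, Z ω ∂P) ≤ ∫ ω, exp (t * Z ω) ∂P := by
    have := ConvexOn.map_integral_le (μ := P) (s := Set.univ) (f := fun ω => t * Z ω)
      convexOn_exp continuous_exp.continuousOn isClosed_univ
      (Filter.Eventually.of_forall (fun ω => Set.mem_univ _))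
      (hZint.const_mul t)
      (by
        have := hexpint Z hZmeas (fun ω => by
          rw [abs_of_nonneg (hZnonneg ω)]; exact hZle ω) t
        exact this)
    rwa [integral_const_mul] at this
  -- conclude
  have hfinal : t * ∫ ω, Z ω ∂P ≤ 2 * L := by
    have := hjensen.trans hintZexp
    exact Real.exp_le_exp.1 this
  have hintZ : ∫ ω, Z ω ∂P ≤ 2 * L / t := by
    rw [le_div_iff₀ ht]
    linarith [hfinal]
  have hgoal : (∫ ω, ⨆ i : Fin n,
      |∑ l ∈ Finset.univ.filter (fun l => l < i), (g (X l ω) - m)| ∂P) = ∫ ω, Z ω ∂P := rfl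
  rw [hgoal]
  refine hintZ.trans (le_of_eq ?_)
  rw [htdef, div_div_eq_mul_div,
    show 2 * L * (M * Real.sqrt ((n:ℝ)-1)) / Real.sqrt (2*L)
      = M * (Real.sqrt ((n:ℝ)-1) * (2*L / Real.sqrt (2*L))) by ring,
    Real.div_sqrt, ← Real.sqrt_mul (by linarith : (0:ℝ) ≤ (n:ℝ)-1)]
  congr 2
  ring


end
end

section
/- For every δ > 0 there exists a constant Δ(δ) depending only on δ such that for all n ≥ 2 and all (j,k): E[ η_{jk,γ}² ] ≤ (1+δ)² · 2γ (ln n/n) · D_{jk} + Δ(δ) (γ ln n/n)² ‖ψ_{jk}‖_∞², where D_{jk} = ∫ ψ_{jk}² f. -/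
open MeasureTheory ProbabilityTheory Filter
open scoped ENNReal NNReal BigOperators

noncomputable section

/- ==== auxiliary lemmas ==== -/

lemma haar_measurable' (j k : ℤ) : Measurable (haar j k) := by
  unfold haar
  by_cases h : j = -1
  · simp only [if_pos h]
    exact measurable_const.indicator measurableSet_Ico
  · simp only [if_neg h]
    exact (((measurable_const.indicator measurableSet_Ico).sub
      (measurable_const.indicator measurableSet_Ico)).const_mul _)

lemma indicator_mem' (s : Set ℝ) (x : ℝ) :
    s.indicator (fun _ => (1:ℝ)) x ∈ Set.Icc (0:ℝ) 1 := by
  classical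
  rw [Set.indicator_apply]; split <;> norm_num

lemma haar_abs_le' (j k : ℤ) (x : ℝ) : |haar j k x| ≤ haarSupNorm j := by
  unfold haar haarSupNorm
  by_cases h : j = -1
  · simp only [if_pos h]
    obtain ⟨h1, h2⟩ := indicator_mem' (Set.Ico (k : ℝ) ((k : ℝ) + 1)) x
    rw [abs_le]; constructor <;> linarith
  · simp only [if_neg h]
    have h2 : (0:ℝ) < (2 : ℝ) ^ ((j : ℝ) / 2) := Real.rpow_pos_of_pos two_pos _
    rw [abs_mul, abs_of_pos h2]
    obtain ⟨ha1, ha2⟩ := indicator_mem' (Set.Ico ((k : ℝ) * (2 : ℝ) ^ (-j)) (((k : ℝ) + 1 / 2) * (2 : ℝ) ^ (-j))) x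
    obtain ⟨hb1, hb2⟩ := indicator_mem' (Set.Ico (((k : ℝ) + 1 / 2) * (2 : ℝ) ^ (-j)) (((k : ℝ) + 1) * (2 : ℝ) ^ (-j))) x
    have habs : |(Set.Ico ((k : ℝ) * (2 : ℝ) ^ (-j)) (((k : ℝ) + 1 / 2) * (2 : ℝ) ^ (-j))).indicator (fun _ => (1:ℝ)) x
        - (Set.Ico (((k : ℝ) + 1 / 2) * (2 : ℝ) ^ (-j)) (((k : ℝ) + 1) * (2 : ℝ) ^ (-j))).indicator (fun _ => (1:ℝ)) x| ≤ (1:ℝ) :=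
      abs_le.2 ⟨by linarith, by linarith⟩
    calc (2:ℝ) ^ ((j : ℝ) / 2) * _ ≤ (2:ℝ) ^ ((j : ℝ) / 2) * 1 :=
          mul_le_mul_of_nonneg_left habs h2.le
      _ = _ := mul_one _

lemma empVarG_nonneg' {n : ℕ} (g : ℝ → ℝ) (Y : Fin n → ℝ) : 0 ≤ empVarG g Y := by
  unfold empVarG
  apply mul_nonneg
  · apply inv_nonneg.2
    rcases Nat.eq_zero_or_pos n with h | h
    · simp [h]
    · have : (1:ℝ) ≤ n := by exact_mod_cast h
      nlinarith
  · exact Finset.sum_nonneg fun i _ => Finset.sum_nonneg fun l _ => sq_nonneg _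

lemma amgm' (δ a b : ℝ) (hδ : 0 < δ) : 2 * a * b ≤ δ * a ^ 2 + (1 / δ) * b ^ 2 := by
  have hid : δ * (δ * a ^ 2 + (1 / δ) * b ^ 2) = δ ^ 2 * a ^ 2 + b ^ 2 := by
    field_simp
  have hmul : δ * (2 * a * b) ≤ δ * (δ * a ^ 2 + (1 / δ) * b ^ 2) := by
    rw [hid]; nlinarith [sq_nonneg (δ * a - b)]
  exact le_of_mul_le_mul_left hmul hδ

lemma thresh_core' (δ γ M s ln nn : ℝ) (hδ : 0 < δ) (hγ : 0 < γ) (hln : 0 ≤ ln)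
    (hnn : 0 < nn) (hM : 0 ≤ M) (hs : 0 ≤ s) :
    (Real.sqrt (2 * γ * (s + 2 * M * Real.sqrt (2 * γ * s * ln / nn)
        + 8 * γ * M ^ 2 * ln / nn) * ln / nn) + 2 * M * γ * ln / (3 * nn)) ^ 2
      ≤ (1 + δ) ^ 2 * 2 * γ * (ln / nn) * s
        + (2 * (1 + δ) * (2 / δ + 8) + (4 / 9) * (1 + 1 / δ)) * (γ * ln / nn) ^ 2 * M ^ 2 := by
  obtain ⟨L, hLdef⟩ : ∃ L, ln / nn = L := ⟨_, rfl⟩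
  have hL : 0 ≤ L := hLdef ▸ div_nonneg hln hnn.le
  have harg : 2 * γ * s * ln / nn = s * (2 * γ * L) := by rw [← hLdef]; ring
  have h2γL : 0 ≤ 2 * γ * L := by positivity
  have hin : Real.sqrt (2 * γ * s * ln / nn) = Real.sqrt s * Real.sqrt (2 * γ * L) := by
    rw [harg, Real.sqrt_mul hs]
  have hss : Real.sqrt s ^ 2 = s := Real.sq_sqrt hs
  have hgg : Real.sqrt (2 * γ * L) ^ 2 = 2 * γ * L := Real.sq_sqrt h2γL
  have hsn : 0 ≤ Real.sqrt s := Real.sqrt_nonneg _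
  have hgn : 0 ≤ Real.sqrt (2 * γ * L) := Real.sqrt_nonneg _
  obtain ⟨t, htval⟩ : ∃ t, s + 2 * M * Real.sqrt (2 * γ * s * ln / nn)
      + 8 * γ * M ^ 2 * ln / nn = t := ⟨_, rfl⟩
  have htval' : t = s + 2 * M * (Real.sqrt s * Real.sqrt (2 * γ * L))
      + 8 * γ * M ^ 2 * L := by
    rw [← htval, hin, ← hLdef]; ring
  have ht0 : 0 ≤ t := by
    rw [htval']
    have h1 : 0 ≤ 2 * M * (Real.sqrt s * Real.sqrt (2 * γ * L)) := by positivity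
    have h2 : 0 ≤ 8 * γ * M ^ 2 * L := by positivity
    linarith
  have htle : t ≤ (1 + δ) * s + (2 / δ + 8) * γ * M ^ 2 * L := by
    rw [htval']
    have key := amgm' δ (Real.sqrt s) (M * Real.sqrt (2 * γ * L)) hδ
    have hb : (M * Real.sqrt (2 * γ * L)) ^ 2 = M ^ 2 * (2 * γ * L) := by
      rw [mul_pow, hgg]
    rw [hb, hss] at key
    have e1 : 2 * Real.sqrt s * (M * Real.sqrt (2 * γ * L)) = 2 * M * (Real.sqrt s * Real.sqrt (2 * γ * L)) := by ring
    have e2 : 1 / δ * (M ^ 2 * (2 * γ * L)) = 2 / δ * (γ * M ^ 2 * L) := by ring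
    have e3 : (2 / δ + 8) * γ * M ^ 2 * L = 2 / δ * (γ * M ^ 2 * L) + 8 * γ * M ^ 2 * L := by ring
    linarith [key]
  have hargu : 2 * γ * t * ln / nn = 2 * γ * L * t := by rw [← hLdef]; ring
  obtain ⟨u, hudef⟩ : ∃ u, Real.sqrt (2 * γ * t * ln / nn) = u := ⟨_, rfl⟩
  have hu0 : 0 ≤ u := hudef ▸ Real.sqrt_nonneg _
  have hu2 : u ^ 2 = 2 * γ * L * t := by
    rw [← hudef, hargu]; exact Real.sq_sqrt (by positivity)
  obtain ⟨c, hcdef⟩ : ∃ c, 2 * M * γ * ln / (3 * nn) = c := ⟨_, rfl⟩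
  have hcval : c = (2 / 3) * M * γ * L := by rw [← hcdef, ← hLdef]; ring
  have hc0 : 0 ≤ c := by rw [hcval]; positivity
  rw [show Real.sqrt (2 * γ * (s + 2 * M * Real.sqrt (2 * γ * s * ln / nn)
        + 8 * γ * M ^ 2 * ln / nn) * ln / nn) = u from by rw [← hudef, htval], hcdef, hLdef,
     show γ * ln / nn = γ * L from by rw [← hLdef]; ring]
  have step1 : (u + c) ^ 2 ≤ (1 + δ) * u ^ 2 + (1 + 1 / δ) * c ^ 2 := by
    have h2uc := amgm' δ u c hδ
    nlinarith [h2uc]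
  have step2 : (1 + δ) * u ^ 2
      ≤ (1 + δ) * (2 * γ * L) * ((1 + δ) * s + (2 / δ + 8) * γ * M ^ 2 * L) := by
    rw [hu2]
    have h := mul_le_mul_of_nonneg_left htle (by positivity : (0:ℝ) ≤ (1 + δ) * (2 * γ * L))
    linarith [h]
  have step3 : (1 + 1 / δ) * c ^ 2 = (4 / 9) * (1 + 1 / δ) * (γ * L) ^ 2 * M ^ 2 := by
    rw [hcval]; ring
  have hfin : (1 + δ) * (2 * γ * L) * ((1 + δ) * s + (2 / δ + 8) * γ * M ^ 2 * L)
      = (1 + δ) ^ 2 * 2 * γ * L * s + 2 * (1 + δ) * (2 / δ + 8) * (γ * L) ^ 2 * M ^ 2 := by ring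
  calc (u + c) ^ 2 ≤ (1 + δ) * u ^ 2 + (1 + 1 / δ) * c ^ 2 := step1
    _ ≤ (1 + δ) * (2 * γ * L) * ((1 + δ) * s + (2 / δ + 8) * γ * M ^ 2 * L)
        + (4 / 9) * (1 + 1 / δ) * (γ * L) ^ 2 * M ^ 2 := by rw [← step3]; linarith
    _ = (1 + δ) ^ 2 * 2 * γ * L * s
        + (2 * (1 + δ) * (2 / δ + 8) + (4 / 9) * (1 + 1 / δ)) * (γ * L) ^ 2 * M ^ 2 := by
          rw [hfin]; ring

lemma threshG_sq_le' (δ γ : ℝ) (hδ : 0 < δ) (hγ : 0 < γ) {n : ℕ} (hn : 2 ≤ n)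
    (M : ℝ) (hM : 0 ≤ M) (g : ℝ → ℝ) (Y : Fin n → ℝ) :
    (threshG γ M g Y) ^ 2 ≤ (1 + δ) ^ 2 * 2 * γ * (Real.log n / n) * empVarG g Y
      + (2 * (1 + δ) * (2 / δ + 8) + (4 / 9) * (1 + 1 / δ)) * (γ * Real.log n / n) ^ 2 * M ^ 2 := by
  have hn1 : (1:ℝ) ≤ (n:ℝ) := by exact_mod_cast Nat.one_le_of_lt hn
  have hln : 0 ≤ Real.log n := Real.log_nonneg hn1
  have hnn : (0:ℝ) < (n:ℝ) := by linarith
  have h := thresh_core' δ γ M (empVarG g Y) (Real.log n) (n:ℝ) hδ hγ hln hnn hM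
    (empVarG_nonneg' g Y)
  calc (threshG γ M g Y) ^ 2
      = (Real.sqrt (2 * γ * (empVarG g Y + 2 * M * Real.sqrt (2 * γ * empVarG g Y * Real.log n / n)
          + 8 * γ * M ^ 2 * Real.log n / n) * Real.log n / n)
          + 2 * M * γ * Real.log n / (3 * n)) ^ 2 := rfl
    _ ≤ _ := h

lemma integral_comp_density' {Ω : Type} [MeasurableSpace Ω] (P : Measure Ω) (X : Ω → ℝ)
    (hX : Measurable X) (f : ℝ → ℝ) (hfm : Measurable f) (hf0 : ∀ x, 0 ≤ f x)
    (hmap : Measure.map X P = volume.withDensity fun x => ENNReal.ofReal (f x))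
    (φ : ℝ → ℝ) (hφ : Measurable φ) :
    ∫ ω, φ (X ω) ∂P = ∫ x, φ x * f x := by
  rw [← integral_map hX.aemeasurable hφ.aestronglyMeasurable, hmap]
  have h1 : (fun x => ENNReal.ofReal (f x)) = fun x => ((f x).toNNReal : ENNReal) := rfl
  rw [h1, integral_withDensity_eq_integral_smul hfm.real_toNNReal]
  congr 1; funext x
  simp [NNReal.smul_def, Real.coe_toNNReal _ (hf0 x), mul_comm]

lemma filter_card' (n : ℕ) (i : Fin n) :
    (Finset.univ.filter (fun l => l < i)).card = (i : ℕ) := by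
  have h : Finset.univ.filter (fun l => l < i) = Finset.Iio i := by
    ext l; simp [Finset.mem_Iio]
  rw [h, Fin.card_Iio]

lemma sum_card' (n : ℕ) (hn : 1 ≤ n) :
    2 * ∑ i : Fin n, ((Finset.univ.filter (fun l => l < i)).card : ℝ)
      = (n:ℝ) * ((n:ℝ) - 1) := by
  have h1 : ∀ i : Fin n, ((Finset.univ.filter (fun l => l < i)).card : ℝ) = ((i : ℕ) : ℝ) := by
    intro i; rw [filter_card']
  simp_rw [h1]
  have h2 : ∑ i : Fin n, ((i : ℕ) : ℝ) = ((∑ i ∈ Finset.range n, i : ℕ) : ℝ) := by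
    rw [Nat.cast_sum]
    exact Fin.sum_univ_eq_sum_range (fun i => ((i : ℕ) : ℝ)) n
  rw [h2]
  have h3 : (∑ i ∈ Finset.range n, i) * 2 = n * (n - 1) := Finset.sum_range_id_mul_two n
  have h4 : ((∑ i ∈ Finset.range n, i : ℕ) : ℝ) * 2 = (n:ℝ) * ((n:ℝ) - 1) := by
    rw [show (n:ℝ) - 1 = ((n - 1 : ℕ) : ℝ) from by rw [Nat.cast_sub hn]; norm_num]
    exact_mod_cast congrArg (Nat.cast : ℕ → ℝ) h3
  linarith

/-- The bound (B.5) on the expected squared threshold: for all `δ > 0` there is `Δ(δ)` such that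
`E[η_{jk,γ}²] ≤ (1+δ)² 2γ (ln n/n) D_{jk} + Δ(δ) (γ ln n/n)² ‖ψ_{jk}‖_∞²`
where `D_{jk} = ∫ ψ_{jk}² f`. -/
theorem statement13 (δ : ℝ) (hδ : 0 < δ) :
    ∃ Δ : ℝ, 0 < Δ ∧ ∀ γ : ℝ, 0 < γ → ∀ n : ℕ, 2 ≤ n →
    ∀ (Ω : Type) (_ : MeasurableSpace Ω) (P : Measure Ω), IsProbabilityMeasure P →
    ∀ f : ℝ → ℝ, IsDensity f → MemLp f 2 volume →
    ∀ X : Fin n → Ω → ℝ, IsIIDSample P X f →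
    ∀ j k : ℤ, -1 ≤ j →
    (∫ ω, (thresh γ j k (fun i => X i ω)) ^ 2 ∂P) ≤
      (1 + δ) ^ 2 * 2 * γ * (Real.log n / n) * (∫ x : ℝ, (haar j k x) ^ 2 * f x)
        + Δ * (γ * Real.log n / n) ^ 2 * (haarSupNorm j) ^ 2 := by
  classical
  refine ⟨2 * (1 + δ) * (2 / δ + 8) + (4 / 9) * (1 + 1 / δ), by positivity, ?_⟩
  intro γ hγ n hn Ω mΩ P hP f hf hf2 X hX j k hj
  obtain ⟨hfm, hf0, hf1⟩ := hf
  obtain ⟨hXm, hXi, hXd⟩ := hX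
  set Δ : ℝ := 2 * (1 + δ) * (2 / δ + 8) + (4 / 9) * (1 + 1 / δ) with hΔdef
  have hgm : Measurable (haar j k) := haar_measurable' j k
  have hgb : ∀ x, |haar j k x| ≤ haarSupNorm j := haar_abs_le' j k
  have hM : 0 ≤ haarSupNorm j := le_trans (abs_nonneg _) (hgb 0)
  have hD0 : 0 ≤ ∫ x, (haar j k x) ^ 2 * f x :=
    integral_nonneg fun x => mul_nonneg (sq_nonneg _) (hf0 x)
  have hn1 : (1:ℝ) ≤ (n:ℝ) := by exact_mod_cast Nat.one_le_of_lt hn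
  have hln : 0 ≤ Real.log n := Real.log_nonneg hn1
  have hnn : (0:ℝ) < (n:ℝ) := by linarith
  -- distributional identities
  have hEphi : ∀ (i : Fin n) (φ : ℝ → ℝ), Measurable φ →
      ∫ ω, φ (X i ω) ∂P = ∫ x, φ x * f x := fun i φ hφ =>
    integral_comp_density' P (X i) (hXm i) f hfm hf0 (hXd i) φ hφ
  have hEsq : ∀ i : Fin n, ∫ ω, (haar j k (X i ω)) ^ 2 ∂P = ∫ x, (haar j k x) ^ 2 * f x :=
    fun i => hEphi i (fun x => (haar j k x) ^ 2) (hgm.pow_const 2)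
  have hE1 : ∀ i : Fin n, ∫ ω, haar j k (X i ω) ∂P = ∫ x, haar j k x * f x :=
    fun i => hEphi i _ hgm
  -- integrability
  have hmsq : ∀ i : Fin n, Measurable fun ω => (haar j k (X i ω)) ^ 2 :=
    fun i => (hgm.comp (hXm i)).pow_const 2
  have hint_sq : ∀ i : Fin n, Integrable (fun ω => (haar j k (X i ω)) ^ 2) P := by
    intro i
    refine Integrable.mono' (integrable_const ((haarSupNorm j) ^ 2))
      (hmsq i).aestronglyMeasurable (Filter.Eventually.of_forall fun ω => ?_)
    rw [Real.norm_eq_abs, abs_of_nonneg (sq_nonneg _)]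
    have := hgb (X i ω)
    have h1 := abs_le.1 this
    nlinarith [h1.1, h1.2]
  have hint_mul : ∀ i l : Fin n,
      Integrable (fun ω => haar j k (X i ω) * haar j k (X l ω)) P := by
    intro i l
    refine Integrable.mono' (integrable_const ((haarSupNorm j) ^ 2))
      ((hgm.comp (hXm i)).mul (hgm.comp (hXm l))).aestronglyMeasurable
      (Filter.Eventually.of_forall fun ω => ?_)
    rw [Real.norm_eq_abs, abs_mul]
    calc |haar j k (X i ω)| * |haar j k (X l ω)| ≤ haarSupNorm j * haarSupNorm j :=
          mul_le_mul (hgb _) (hgb _) (abs_nonneg _) hM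
      _ = (haarSupNorm j) ^ 2 := by ring
  have hexp : ∀ i l : Fin n, (fun ω => (haar j k (X i ω) - haar j k (X l ω)) ^ 2)
      = fun ω => (haar j k (X i ω)) ^ 2 - 2 * (haar j k (X i ω) * haar j k (X l ω))
          + (haar j k (X l ω)) ^ 2 := by
    intro i l; funext ω; ring
  have hint_term : ∀ i l : Fin n,
      Integrable (fun ω => (haar j k (X i ω) - haar j k (X l ω)) ^ 2) P := by
    intro i l
    rw [hexp i l]
    exact ((hint_sq i).sub ((hint_mul i l).const_mul 2)).add (hint_sq l)
  -- expected value of each pair term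
  have hEterm : ∀ i l : Fin n, l ≠ i →
      ∫ ω, (haar j k (X i ω) - haar j k (X l ω)) ^ 2 ∂P
        ≤ 2 * ∫ x, (haar j k x) ^ 2 * f x := by
    intro i l hil
    have hind : IndepFun (fun ω => haar j k (X i ω)) (fun ω => haar j k (X l ω)) P :=
      (hXi.indepFun (Ne.symm hil)).comp hgm hgm
    have hcross : ∫ ω, haar j k (X i ω) * haar j k (X l ω) ∂P
        = (∫ x, haar j k x * f x) ^ 2 := by
      have := hind.integral_mul_eq_mul_integral (hgm.comp (hXm i)).aestronglyMeasurable
        (hgm.comp (hXm l)).aestronglyMeasurable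
      calc ∫ ω, haar j k (X i ω) * haar j k (X l ω) ∂P
          = (∫ ω, haar j k (X i ω) ∂P) * ∫ ω, haar j k (X l ω) ∂P := this
        _ = (∫ x, haar j k x * f x) ^ 2 := by rw [hE1 i, hE1 l, sq]
    have hint_ab : Integrable (fun ω => (haar j k (X i ω)) ^ 2
        - 2 * (haar j k (X i ω) * haar j k (X l ω))) P :=
      (hint_sq i).sub ((hint_mul i l).const_mul 2)
    rw [hexp i l, integral_add hint_ab (hint_sq l),
      integral_sub (hint_sq i) ((hint_mul i l).const_mul 2), integral_const_mul,
      hEsq i, hEsq l, hcross]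
    nlinarith [sq_nonneg (∫ x, haar j k x * f x)]
  -- expectation of the empirical variance
  have hsmeas : Measurable fun ω => empVarG (haar j k) (fun i => X i ω) := by
    unfold empVarG
    exact (Finset.measurable_sum _ fun i _ => Finset.measurable_sum _ fun l _ =>
      ((hgm.comp (hXm i)).sub (hgm.comp (hXm l))).pow_const 2).const_mul _
  have hsint : Integrable (fun ω => empVarG (haar j k) (fun i => X i ω)) P := by
    unfold empVarG
    exact (integrable_finset_sum _ fun i _ =>
      integrable_finset_sum _ fun l _ => hint_term i l).const_mul _
  have hsval : ∫ ω, empVarG (haar j k) (fun i => X i ω) ∂P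
      = ((n : ℝ) * ((n : ℝ) - 1))⁻¹ * ∑ i : Fin n,
          ∑ l ∈ Finset.univ.filter (fun l => l < i),
            ∫ ω, (haar j k (X i ω) - haar j k (X l ω)) ^ 2 ∂P := by
    have hrfl : (fun ω => empVarG (haar j k) (fun i => X i ω))
        = fun ω => ((n : ℝ) * ((n : ℝ) - 1))⁻¹ * ∑ i : Fin n,
            ∑ l ∈ Finset.univ.filter (fun l => l < i),
              (haar j k (X i ω) - haar j k (X l ω)) ^ 2 := rfl
    rw [hrfl, integral_const_mul]
    congr 1
    rw [integral_finset_sum _ fun i _ => integrable_finset_sum _ fun l _ => hint_term i l]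
    exact Finset.sum_congr rfl fun i _ => integral_finset_sum _ fun l _ => hint_term i l
  have hsle : ∫ ω, empVarG (haar j k) (fun i => X i ω) ∂P ≤ ∫ x, (haar j k x) ^ 2 * f x := by
    rw [hsval]
    have hbd : ∑ i : Fin n, ∑ l ∈ Finset.univ.filter (fun l => l < i),
        ∫ ω, (haar j k (X i ω) - haar j k (X l ω)) ^ 2 ∂P
        ≤ ∑ i : Fin n, ((Finset.univ.filter (fun l : Fin n => l < i)).card : ℝ)
            * (2 * ∫ x, (haar j k x) ^ 2 * f x) := by
      refine Finset.sum_le_sum fun i _ => ?_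
      calc ∑ l ∈ Finset.univ.filter (fun l => l < i),
            ∫ ω, (haar j k (X i ω) - haar j k (X l ω)) ^ 2 ∂P
          ≤ ∑ l ∈ Finset.univ.filter (fun l : Fin n => l < i),
            (2 * ∫ x, (haar j k x) ^ 2 * f x) := by
            refine Finset.sum_le_sum fun l hl => ?_
            exact hEterm i l (ne_of_lt (Finset.mem_filter.1 hl).2)
        _ = ((Finset.univ.filter (fun l : Fin n => l < i)).card : ℝ)
            * (2 * ∫ x, (haar j k x) ^ 2 * f x) := by
            rw [Finset.sum_const, nsmul_eq_mul]
    have hsum : ∑ i : Fin n, ((Finset.univ.filter (fun l : Fin n => l < i)).card : ℝ)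
        * (2 * ∫ x, (haar j k x) ^ 2 * f x)
        = (n:ℝ) * ((n:ℝ) - 1) * ∫ x, (haar j k x) ^ 2 * f x := by
      rw [← Finset.sum_mul]
      have := sum_card' n (le_trans one_le_two hn)
      nlinarith [this]
    have hc : (0:ℝ) < (n:ℝ) * ((n:ℝ) - 1) := by nlinarith [show (2:ℝ) ≤ (n:ℝ) from by exact_mod_cast hn]
    calc ((n : ℝ) * ((n : ℝ) - 1))⁻¹ * ∑ i : Fin n,
          ∑ l ∈ Finset.univ.filter (fun l => l < i),
            ∫ ω, (haar j k (X i ω) - haar j k (X l ω)) ^ 2 ∂P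
        ≤ ((n : ℝ) * ((n : ℝ) - 1))⁻¹ * ((n:ℝ) * ((n:ℝ) - 1) * ∫ x, (haar j k x) ^ 2 * f x) := by
          refine mul_le_mul_of_nonneg_left ?_ (inv_nonneg.2 hc.le)
          rw [← hsum]; exact hbd
      _ = ∫ x, (haar j k x) ^ 2 * f x := by
          rw [← mul_assoc, inv_mul_cancel₀ hc.ne', one_mul]
  -- pointwise bound and conclusion
  have hpt : ∀ ω, (thresh γ j k (fun i => X i ω)) ^ 2
      ≤ (1 + δ) ^ 2 * 2 * γ * (Real.log n / n) * empVarG (haar j k) (fun i => X i ω)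
        + Δ * (γ * Real.log n / n) ^ 2 * (haarSupNorm j) ^ 2 := by
    intro ω
    exact threshG_sq_le' δ γ hδ hγ hn (haarSupNorm j) hM (haar j k) (fun i => X i ω)
  have hA : 0 ≤ (1 + δ) ^ 2 * 2 * γ * (Real.log n / n) := by positivity
  have hRHSint : Integrable (fun ω =>
      (1 + δ) ^ 2 * 2 * γ * (Real.log n / n) * empVarG (haar j k) (fun i => X i ω)
        + Δ * (γ * Real.log n / n) ^ 2 * (haarSupNorm j) ^ 2) P :=
    (hsint.const_mul _).add (integrable_const _)
  calc ∫ ω, (thresh γ j k (fun i => X i ω)) ^ 2 ∂P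
      ≤ ∫ ω, ((1 + δ) ^ 2 * 2 * γ * (Real.log n / n) * empVarG (haar j k) (fun i => X i ω)
          + Δ * (γ * Real.log n / n) ^ 2 * (haarSupNorm j) ^ 2) ∂P :=
        integral_mono_of_nonneg (Filter.Eventually.of_forall fun ω => sq_nonneg _)
          hRHSint (Filter.Eventually.of_forall hpt)
    _ = (1 + δ) ^ 2 * 2 * γ * (Real.log n / n) * ∫ ω, empVarG (haar j k) (fun i => X i ω) ∂P
          + Δ * (γ * Real.log n / n) ^ 2 * (haarSupNorm j) ^ 2 := by
        rw [integral_add (hsint.const_mul _) (integrable_const _), integral_const_mul,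
          integral_const, probReal_univ]
        simp
    _ ≤ (1 + δ) ^ 2 * 2 * γ * (Real.log n / n) * (∫ x : ℝ, (haar j k x) ^ 2 * f x)
          + Δ * (γ * Real.log n / n) ^ 2 * (haarSupNorm j) ^ 2 := by
        exact add_le_add_left (mul_le_mul_of_nonneg_left hsle hA) _


end
end
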